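/- Necessity of the SMQ stopping rule: let N be a finite index set, δ ≥ 0 a real, and for each j ∈ N reals ℓ_j ≤ r_j. Let S ⊆ N be nonempty with N∖S nonempty, and let x_i ∈ [ℓ_i, r_i] for every i ∈ S. Suppose min_{i∈S} x_i > (min_{j∈N∖S} ℓ_j) + δ and min_{i∈S} x_i ≤ r_j for every j ∈ N∖S. Then for every real v there exists a completion x' : N → ℝ with x'_i = x_i for all i ∈ S and x'_j ∈ {ℓ_j, r_j} for all j ∈ N∖S such that it is NOT the case that min_{j∈N} x'_j ≤ v ≤ (min_{j∈N} x'_j) + δ. -/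

import Mathlib

/-- **Necessity of the SMQ stopping rule.**
Let `N` (here, the whole finite type `ι`) be the index set, `δ ≥ 0`, and `ℓ j ≤ r j` for all `j`.
Let `S` be nonempty with nonempty complement, and `x i ∈ [ℓ i, r i]` for `i ∈ S`.
If `min_{i ∈ S} x i > (min_{j ∉ S} ℓ j) + δ` and `min_{i ∈ S} x i ≤ r j` for every `j ∉ S`,
then for every real `v` there is a completion `x'` of `x` taking endpoint values on `Sᶜ`
such that `v` is not a `δ`-minimum of `x'`. -/
theorem smq_stopping_rule_necessary {ι : Type*} [Fintype ι] [Nonempty ι] [DecidableEq ι]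
    (δ : ℝ) (hδ : 0 ≤ δ) (ℓ r : ι → ℝ) (hlr : ∀ j, ℓ j ≤ r j)
    (S : Finset ι) (hS : S.Nonempty) (hSc : Sᶜ.Nonempty)
    (x : ι → ℝ) (hx : ∀ i ∈ S, ℓ i ≤ x i ∧ x i ≤ r i)
    (hfail : Sᶜ.inf' hSc ℓ + δ < S.inf' hS x)
    (hdummy : ∀ j ∈ Sᶜ, S.inf' hS x ≤ r j)
    (v : ℝ) :
    ∃ x' : ι → ℝ, (∀ i ∈ S, x' i = x i) ∧ (∀ j ∈ Sᶜ, x' j = ℓ j ∨ x' j = r j) ∧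
      ¬ (Finset.univ.inf' Finset.univ_nonempty x' ≤ v ∧
          v ≤ Finset.univ.inf' Finset.univ_nonempty x' + δ) := by
  set m := S.inf' hS x with hm
  by_cases hv : v < m
  · -- use r on the complement; then the min is ≥ m > v
    refine ⟨fun j => if j ∈ S then x j else r j, fun i hi => by simp [hi],
      fun j hj => Or.inr (by simp [Finset.mem_compl.mp hj]), ?_⟩
    rintro ⟨h1, -⟩
    have : m ≤ Finset.univ.inf' Finset.univ_nonempty fun j => if j ∈ S then x j else r j := by
      apply Finset.le_inf'
      intro j _
      by_cases hj : j ∈ S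
      · show m ≤ (if j ∈ S then x j else r j)
        rw [if_pos hj]
        exact Finset.inf'_le x hj
      · simpa [hj] using hdummy j (Finset.mem_compl.mpr hj)
    linarith
  · -- use ℓ on the complement; then min + δ ≤ L + δ < m ≤ v
    push_neg at hv
    obtain ⟨j0, hj0, hj0eq⟩ := Finset.exists_mem_eq_inf' hSc ℓ
    refine ⟨fun j => if j ∈ S then x j else ℓ j, fun i hi => by simp [hi],
      fun j hj => Or.inl (by simp [Finset.mem_compl.mp hj]), ?_⟩
    rintro ⟨-, h2⟩
    have hjS : j0 ∉ S := Finset.mem_compl.mp hj0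
    have : (Finset.univ.inf' Finset.univ_nonempty fun j => if j ∈ S then x j else ℓ j) ≤ ℓ j0 := by
      exact (Finset.inf'_le (f := fun j => if j ∈ S then x j else ℓ j)
        (Finset.mem_univ j0)).trans_eq (if_neg hjS)
    have hL : Sᶜ.inf' hSc ℓ = ℓ j0 := hj0eq
    linarith
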